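/- Let G be an abelian group and ρ a height on G. Then ρ_∞ is a strong metric height on G, and ρ_∞(α) ≤ ρ₁(α) for all α ∈ G. -/

import Mathlib

noncomputable section

variable {G : Type*} [CommGroup G]

/-- A *height* on an abelian group `G`: a function `ρ : G → [1, ∞)` with `ρ(1) = 1`
and `ρ(α) = ρ(α⁻¹)`. -/
def IsHeight (ρ : G → ℝ) : Prop :=
  ρ 1 = 1 ∧ (∀ α : G, 1 ≤ ρ α) ∧ ∀ α : G, ρ α⁻¹ = ρ α

/-- A *metric height*: a height additionally satisfying `ρ(αβ) ≤ ρ(α)ρ(β)`. -/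
def IsMetricHeight (ρ : G → ℝ) : Prop :=
  IsHeight ρ ∧ ∀ α β : G, ρ (α * β) ≤ ρ α * ρ β

/-- A *strong (non-Archimedean) metric height*: a height additionally satisfying
`ρ(αβ) ≤ max {ρ(α), ρ(β)}`. -/
def IsStrongMetricHeight (ρ : G → ℝ) : Prop :=
  IsHeight ρ ∧ ∀ α β : G, ρ (α * β) ≤ max (ρ α) (ρ β)

/-- The associated metric height
`ρ₁(α) = inf { ∏_n ρ(αₙ) : α = α₁α₂⋯ , αₙ = 1 for a.e. n }`. -/
def metricH (ρ : G → ℝ) (α : G) : ℝ :=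
  sInf {t : ℝ | ∃ a : ℕ → G, {n | a n ≠ 1}.Finite ∧ (∏ᶠ n, a n) = α ∧
    t = ∏ᶠ n, ρ (a n)}

/-- The associated strong metric height
`ρ_∞(α) = inf { max_n ρ(αₙ) : α = α₁α₂⋯ , αₙ = 1 for a.e. n }`. -/
def strongH (ρ : G → ℝ) (α : G) : ℝ :=
  sInf {t : ℝ | ∃ a : ℕ → G, {n | a n ≠ 1}.Finite ∧ (∏ᶠ n, a n) = α ∧
    t = ⨆ n, ρ (a n)}

namespace StrongHAux

/-- The "strong" decomposition set attached to `α`. -/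
def S (ρ : G → ℝ) (α : G) : Set ℝ :=
  {t : ℝ | ∃ a : ℕ → G, {n | a n ≠ 1}.Finite ∧ (∏ᶠ n, a n) = α ∧
    t = ⨆ n, ρ (a n)}

lemma strongH_eq (ρ : G → ℝ) (α : G) : strongH ρ α = sInf (S ρ α) := rfl

lemma height_bdd (ρ : G → ℝ) (h : IsHeight ρ) {a : ℕ → G}
    (ha : {n | a n ≠ 1}.Finite) : BddAbove (Set.range fun n => ρ (a n)) := by
  apply Set.Finite.bddAbove
  refine Set.Finite.subset ((ha.image fun n => ρ (a n)).insert 1) ?_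
  rintro x ⟨n, rfl⟩
  by_cases hn : a n = 1
  · simp [hn, h.1]
  · exact Set.mem_insert_iff.2 (Or.inr ⟨n, hn, rfl⟩)

lemma one_le_ciSup (ρ : G → ℝ) (h : IsHeight ρ) {a : ℕ → G}
    (ha : {n | a n ≠ 1}.Finite) : (1 : ℝ) ≤ ⨆ n, ρ (a n) :=
  le_trans (h.2.1 (a 0)) (le_ciSup (height_bdd ρ h ha) 0)

lemma lb (ρ : G → ℝ) (h : IsHeight ρ) (α : G) : ∀ t ∈ S ρ α, (1 : ℝ) ≤ t := by
  rintro t ⟨a, ha, -, rfl⟩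
  exact one_le_ciSup ρ h ha

lemma bddBelow_S (ρ : G → ℝ) (h : IsHeight ρ) (α : G) : BddBelow (S ρ α) :=
  ⟨1, lb ρ h α⟩

/-- the single-entry sequence -/
def single (α : G) : ℕ → G := fun n => if n = 0 then α else 1

lemma single_supp (α : G) : {n | single α n ≠ 1}.Finite := by
  apply Set.Finite.subset (Set.finite_singleton 0)
  intro n hn
  simp only [single, ne_eq, Set.mem_setOf_eq, ite_eq_right_iff, not_forall] at hn
  simpa using hn.1

lemma single_prod (α : G) : (∏ᶠ n, single α n) = α := by
  rw [finprod_eq_single (single α) 0 fun n hn => by simp [single, hn]]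
  simp [single]

lemma single_sup (ρ : G → ℝ) (h : IsHeight ρ) (α : G) :
    (⨆ n, ρ (single α n)) = ρ α := by
  refine le_antisymm (ciSup_le fun n => ?_) ?_
  · by_cases hn : n = 0
    · simp [single, hn]
    · simp [single, hn, h.1, h.2.1]
  · have := le_ciSup (height_bdd ρ h (single_supp α)) 0
    simpa [single] using this

lemma S_nonempty (ρ : G → ℝ) (h : IsHeight ρ) (α : G) : (S ρ α).Nonempty :=
  ⟨⨆ n, ρ (single α n), single α, single_supp α, single_prod α, rfl⟩

lemma finprod_sum_elim {M : Type*} [CommMonoid M] (a b : ℕ → M)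
    (ha : (Function.mulSupport a).Finite) (hb : (Function.mulSupport b).Finite) :
    (∏ᶠ s : ℕ ⊕ ℕ, Sum.elim a b s) = (∏ᶠ n, a n) * ∏ᶠ n, b n := by
  have huniv : (Set.univ : Set (ℕ ⊕ ℕ)) = Set.range Sum.inl ∪ Set.range Sum.inr := by
    ext s; cases s <;> simp
  have h1 : (Set.range (Sum.inl : ℕ → ℕ ⊕ ℕ) ∩
      Function.mulSupport (Sum.elim a b)).Finite := by
    refine Set.Finite.subset (ha.image Sum.inl) ?_
    rintro s ⟨⟨n, rfl⟩, hs⟩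
    exact ⟨n, hs, rfl⟩
  have h2 : (Set.range (Sum.inr : ℕ → ℕ ⊕ ℕ) ∩
      Function.mulSupport (Sum.elim a b)).Finite := by
    refine Set.Finite.subset (hb.image Sum.inr) ?_
    rintro s ⟨⟨n, rfl⟩, hs⟩
    exact ⟨n, hs, rfl⟩
  rw [← finprod_mem_univ, huniv,
    finprod_mem_union' Set.isCompl_range_inl_range_inr.disjoint h1 h2,
    finprod_mem_range Sum.inl_injective, finprod_mem_range Sum.inr_injective]
  rfl

lemma combine_mem (ρ : G → ℝ) (h : IsHeight ρ) {α β : G} {ta tb : ℝ}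
    (hta : ta ∈ S ρ α) (htb : tb ∈ S ρ β) : max ta tb ∈ S ρ (α * β) := by
  obtain ⟨a, ha, hpa, rfl⟩ := hta
  obtain ⟨b, hb, hpb, rfl⟩ := htb
  set e : ℕ ⊕ ℕ ≃ ℕ := Equiv.natSumNatEquivNat
  set g : ℕ ⊕ ℕ → G := Sum.elim a b with hg
  set c : ℕ → G := fun n => g (e.symm n) with hc
  have hsuppg : {s : ℕ ⊕ ℕ | g s ≠ 1}.Finite := by
    refine Set.Finite.subset ((ha.image Sum.inl).union (hb.image Sum.inr)) ?_
    rintro (n | n) hs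
    · exact Or.inl ⟨n, hs, rfl⟩
    · exact Or.inr ⟨n, hs, rfl⟩
  have hsuppc : {n | c n ≠ 1}.Finite := by
    refine Set.Finite.subset (hsuppg.image e) ?_
    intro n hn
    exact ⟨e.symm n, hn, e.apply_symm_apply n⟩
  have hma : Function.mulSupport a = {n | a n ≠ 1} := rfl
  have hmb : Function.mulSupport b = {n | b n ≠ 1} := rfl
  have hprod : (∏ᶠ n, c n) = α * β := by
    have h1 : (∏ᶠ n, c n) = ∏ᶠ s : ℕ ⊕ ℕ, g s := finprod_comp_equiv e.symm
    rw [h1, hg, finprod_sum_elim a b (hma ▸ ha) (hmb ▸ hb), hpa, hpb]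
  have hrange : Set.range (fun n => ρ (c n)) = Set.range (fun s => ρ (g s)) := by
    have : (fun n => ρ (c n)) = (fun s => ρ (g s)) ∘ e.symm := rfl
    rw [this, e.symm.surjective.range_comp]
  have hsub : Set.range (fun s => ρ (g s)) ⊆
      Set.range (fun n => ρ (a n)) ∪ Set.range (fun n => ρ (b n)) := by
    rintro x ⟨(n | n), rfl⟩
    · exact Or.inl ⟨n, rfl⟩
    · exact Or.inr ⟨n, rfl⟩
  have bddg : BddAbove (Set.range fun s => ρ (g s)) :=
    BddAbove.mono hsub ((height_bdd ρ h ha).union (height_bdd ρ h hb))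
  have hsup : (⨆ n, ρ (c n)) = max (⨆ n, ρ (a n)) (⨆ n, ρ (b n)) := by
    have hiS : (⨆ n, ρ (c n)) = sSup (Set.range fun s => ρ (g s)) := by
      rw [iSup, hrange]
    rw [hiS]
    refine le_antisymm (csSup_le ⟨ρ (g (Sum.inl 0)), ⟨Sum.inl 0, rfl⟩⟩ ?_) (max_le ?_ ?_)
    · rintro x ⟨(n | n), rfl⟩
      · exact le_max_of_le_left (le_ciSup (height_bdd ρ h ha) n)
      · exact le_max_of_le_right (le_ciSup (height_bdd ρ h hb) n)
    · exact ciSup_le fun n => le_csSup bddg ⟨Sum.inl n, rfl⟩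
    · exact ciSup_le fun n => le_csSup bddg ⟨Sum.inr n, rfl⟩
  exact ⟨c, hsuppc, hprod, hsup.symm⟩

end StrongHAux

open StrongHAux in
/-- If `ρ` is a height on `G`, then `ρ_∞` is a strong metric height on `G` with
`ρ_∞ ≤ ρ₁`. -/
theorem strongH_isStrongMetricHeight_and_le (ρ : G → ℝ) (h : IsHeight ρ) :
    IsStrongMetricHeight (strongH ρ) ∧ ∀ α : G, strongH ρ α ≤ metricH ρ α := by
  have hρ1 := h.1
  have hge := h.2.1
  have hinv := h.2.2
  -- basic facts
  have hOneLe : ∀ α : G, (1 : ℝ) ≤ strongH ρ α := fun α =>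
    le_csInf (S_nonempty ρ h α) (lb ρ h α)
  have hOne : strongH ρ 1 = 1 := by
    refine le_antisymm ?_ (hOneLe 1)
    refine csInf_le (bddBelow_S ρ h 1) ?_
    refine ⟨fun _ => 1, by simp, finprod_one, ?_⟩
    simp only [hρ1]
    rw [ciSup_const]
  have hInvMem : ∀ (α : G) (t : ℝ), t ∈ S ρ α → t ∈ S ρ α⁻¹ := by
    rintro α t ⟨a, ha, hp, rfl⟩
    refine ⟨fun n => (a n)⁻¹, ?_, ?_, ?_⟩
    · simpa only [ne_eq, inv_eq_one] using ha
    · rw [finprod_inv_distrib, hp]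
    · simp only [hinv]
  have hInv : ∀ α : G, strongH ρ α⁻¹ = strongH ρ α := by
    intro α
    refine le_antisymm ?_ ?_
    · exact csInf_le_csInf (bddBelow_S ρ h α⁻¹) (S_nonempty ρ h α) (hInvMem α)
    · refine csInf_le_csInf (bddBelow_S ρ h α) (S_nonempty ρ h α⁻¹) ?_
      intro t ht
      exact (by simpa only [inv_inv] using hInvMem α⁻¹ t ht : t ∈ S ρ α)
  have hTri : ∀ α β : G, strongH ρ (α * β) ≤ max (strongH ρ α) (strongH ρ β) := by
    intro α β
    refine le_of_forall_pos_le_add fun ε hε => ?_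
    obtain ⟨ta, hta, hlta⟩ := Real.lt_sInf_add_pos (S_nonempty ρ h α) hε
    obtain ⟨tb, htb, hltb⟩ := Real.lt_sInf_add_pos (S_nonempty ρ h β) hε
    calc strongH ρ (α * β) ≤ max ta tb :=
          csInf_le (bddBelow_S ρ h (α * β)) (combine_mem ρ h hta htb)
      _ ≤ max (strongH ρ α + ε) (strongH ρ β + ε) := max_le_max hlta.le hltb.le
      _ = max (strongH ρ α) (strongH ρ β) + ε := (max_add_add_right _ _ _)
  refine ⟨⟨⟨hOne, hOneLe, hInv⟩, hTri⟩, ?_⟩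
  -- strongH ≤ metricH
  intro α
  refine le_csInf ⟨∏ᶠ n, ρ (single α n), single α, single_supp α, single_prod α, rfl⟩ ?_
  rintro t ⟨a, ha, hp, rfl⟩
  have h1 : strongH ρ α ≤ ⨆ n, ρ (a n) :=
    csInf_le (bddBelow_S ρ h α) ⟨a, ha, hp, rfl⟩
  refine h1.trans (ciSup_le fun m => ?_)
  classical
  set s : Finset ℕ := insert m ha.toFinset with hs
  have hsub : Function.mulSupport (fun n => ρ (a n)) ⊆ ↑s := by
    intro n hn
    rw [Function.mem_mulSupport] at hn
    have : a n ≠ 1 := fun h' => hn (by rw [h', hρ1])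
    exact Finset.mem_coe.2 (Finset.mem_insert_of_mem (ha.mem_toFinset.2 this))
  rw [finprod_eq_prod_of_mulSupport_subset _ hsub]
  have hmem : m ∈ s := Finset.mem_insert_self m _
  calc ρ (a m) = ρ (a m) * 1 := (mul_one _).symm
    _ ≤ ρ (a m) * ∏ i ∈ s.erase m, ρ (a i) := by
        refine mul_le_mul_of_nonneg_left ?_ (le_trans zero_le_one (hge _))
        calc (1 : ℝ) = ∏ _i ∈ s.erase m, (1 : ℝ) := by simp
          _ ≤ ∏ i ∈ s.erase m, ρ (a i) :=
              Finset.prod_le_prod (fun i _ => zero_le_one) (fun i _ => hge _)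
    _ = ∏ i ∈ s, ρ (a i) := Finset.mul_prod_erase s (fun n => ρ (a n)) hmem
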